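/- Every weakly Hausdorff topological space has unique sequential limits; that is, if for every compact Hausdorff space K and continuous map f : K → X the image f[K] is closed in X, and a sequence (aₙ) in X converges to both l₀ and l₁, then l₀ = l₁. -/
import Mathlib

open Set Filter Topology

universe u

/-- A subset `C` of a space `X` is k₁-closed provided for every compact subset `K` of `X`,
the intersection `C ∩ K` is closed in the subspace topology on `K`. -/
def IsK1Closed {X : Type u} [TopologicalSpace X] (C : Set X) : Prop :=
  ∀ K : Set X, IsCompact K → IsClosed ((Subtype.val : K → X) ⁻¹' C)

/-- A space is k₁-Hausdorff provided its diagonal is k₁-closed in its square. -/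
def K1Hausdorff (X : Type u) [TopologicalSpace X] : Prop :=
  IsK1Closed {p : X × X | p.1 = p.2}

/-- A space is KC provided every compact subset is closed. -/
def KCSpace (X : Type u) [TopologicalSpace X] : Prop :=
  ∀ K : Set X, IsCompact K → IsClosed K

/-- A space `X` is weakly Hausdorff provided for every compact Hausdorff space `K` and
continuous `f : K → X`, the image of `f` is closed in `X`. -/
def WeaklyHausdorff (X : Type u) [TopologicalSpace X] : Prop :=
  ∀ (K : Type u) [TopologicalSpace K] [CompactSpace K] [T2Space K]
    (f : K → X), Continuous f → IsClosed (Set.range f)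

/-- A subset `C` of `X` is k₂-closed provided for every compact Hausdorff space `K` and
continuous `f : K → X`, the preimage `f ⁻¹' C` is closed in `K`. -/
def IsK2Closed {X : Type u} [TopologicalSpace X] (C : Set X) : Prop :=
  ∀ (K : Type u) [TopologicalSpace K] [CompactSpace K] [T2Space K]
    (f : K → X), Continuous f → IsClosed (f ⁻¹' C)

/-- A space is k₂-Hausdorff provided its diagonal is k₂-closed in its square. -/
def K2Hausdorff (X : Type u) [TopologicalSpace X] : Prop :=
  IsK2Closed {p : X × X | p.1 = p.2}

/-- A space has unique sequential limits provided every convergent sequence has a unique limit. -/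
def UniqueSequentialLimits (X : Type u) [TopologicalSpace X] : Prop :=
  ∀ (a : ℕ → X) (l₀ l₁ : X),
    Filter.Tendsto a Filter.atTop (nhds l₀) →
    Filter.Tendsto a Filter.atTop (nhds l₁) → l₀ = l₁

/-- Every weakly Hausdorff space has unique sequential limits. -/
theorem weaklyHausdorff_implies_uniqueSequentialLimits (X : Type u) [TopologicalSpace X]
    (h : WeaklyHausdorff X) : UniqueSequentialLimits X := by
  intro a l₀ l₁ h₀ h₁
  by_contra hne
  -- singletons are closed
  have hsingle : ∀ x : X, IsClosed ({x} : Set X) := by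
    intro x
    have := h PUnit.{u+1} (fun _ => x) continuous_const
    simpa using this
  -- for each m, l₁ is in the closed set {l₀} ∪ {a n : n ≥ m}
  have key : ∀ m : ℕ, ∃ n, a (n + m) = l₁ := by
    intro m
    set f : OnePoint (ULift.{u} ℕ) → X :=
      fun p => p.elim l₀ (fun n => a (n.down + m)) with hf
    have hdown : Tendsto (fun n : ULift.{u} ℕ => n.down) cofinite cofinite :=
      Function.Injective.tendsto_cofinite (fun x y hxy => by cases x; cases y; simpa using hxy)
    have hcof : Tendsto (fun n : ULift.{u} ℕ => a (n.down + m)) cofinite (𝓝 l₀) := by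
      have htail : Tendsto (fun n : ℕ => a (n + m)) atTop (𝓝 l₀) :=
        h₀.comp (tendsto_add_atTop_nat m)
      have : Tendsto (fun n : ℕ => a (n + m)) cofinite (𝓝 l₀) := by
        rwa [Nat.cofinite_eq_atTop]
      exact this.comp hdown
    have hfc : Continuous f := by
      rw [OnePoint.continuous_iff_from_discrete]
      exact hcof
    have hclosed : IsClosed (Set.range f) := h _ f hfc
    have hmem : l₁ ∈ Set.range f := by
      refine hclosed.mem_of_tendsto (h₁.comp (tendsto_add_atTop_nat m)) ?_
      filter_upwards [] with n
      exact ⟨(ULift.up n : ULift.{u} ℕ), rfl⟩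
    obtain ⟨p, hp⟩ := hmem
    cases p with
    | infty => exact absurd hp hne
    | coe n => exact ⟨n.down, hp⟩
  -- but eventually a n ≠ l₁ since a → l₀ and {l₁} is closed
  have hev : ∀ᶠ n in atTop, a n ≠ l₁ := by
    have : ({l₁}ᶜ : Set X) ∈ 𝓝 l₀ :=
      (hsingle l₁).isOpen_compl.mem_nhds (by simpa using hne)
    have := h₀.eventually_mem this
    filter_upwards [this] with n hn
    simpa using hn
  obtain ⟨m, hm⟩ := eventually_atTop.mp hev
  obtain ⟨n, hn⟩ := key m
  exact hm (n + m) (Nat.le_add_left m n) hn
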